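/- Let w(t) be implicitly defined by the integral equation ∫_{t-w(t)}^{t} β(τ) dτ = x(t - w(t)), where β and x are differentiable functions with ẋ(s) = α(s) - β(s) for some function α. Then, wherever w is differentiable and α(t - w(t)) ≠ 0, the derivative satisfies ẇ(t) = 1 - β(t)/α(t - w(t)). -/

import Mathlib

/-- If w is implicitly defined by ∫_{t-w(t)}^t β(τ) dτ = x(t - w(t)),
with ẋ = α - β, then wherever w is differentiable and α(t - w(t)) ≠ 0,
ẇ(t) = 1 - β(t)/α(t - w(t)). -/
theorem stmt_0 (α β x w w' : ℝ → ℝ)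
    (hβ : Continuous β)
    (hx : ∀ s : ℝ, HasDerivAt x (α s - β s) s)
    (hrel : ∀ t : ℝ, (∫ τ in (t - w t)..t, β τ) = x (t - w t))
    (t : ℝ)
    (hw : HasDerivAt w (w' t) t)
    (hα : α (t - w t) ≠ 0) :
    w' t = 1 - β t / α (t - w t) := by
  set B : ℝ → ℝ := fun s => ∫ τ in (0:ℝ)..s, β τ with hBdef
  have hB : ∀ s : ℝ, HasDerivAt B (β s) s := fun s =>
    intervalIntegral.integral_hasDerivAt_right (hβ.intervalIntegrable _ _)
      (hβ.stronglyMeasurableAtFilter _ _) hβ.continuousAt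
  have hsplit : ∀ s : ℝ, (∫ τ in (s - w s)..s, β τ) = B s - B (s - w s) := by
    intro s
    rw [hBdef]
    simp only
    rw [← intervalIntegral.integral_add_adjacent_intervals
      (hβ.intervalIntegrable 0 (s - w s)) (hβ.intervalIntegrable (s - w s) s)]
    abel
  set u : ℝ → ℝ := fun s => s - w s with hudef
  have hu : HasDerivAt u (1 - w' t) t := (hasDerivAt_id t).sub hw
  have hf : HasDerivAt (fun s => B s - B (u s)) (β t - β (u t) * (1 - w' t)) t :=
    (hB t).sub ((hB (u t)).comp t hu)
  have hg : HasDerivAt (fun s => x (u s)) ((α (u t) - β (u t)) * (1 - w' t)) t :=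
    (hx (u t)).comp t hu
  have heq : (fun s => B s - B (u s)) = fun s => x (u s) := by
    funext s
    rw [← hsplit s, hrel s]
  rw [heq] at hf
  have hkey : β t - β (u t) * (1 - w' t) = (α (u t) - β (u t)) * (1 - w' t) :=
    hf.unique hg
  have hβt : β t = α (u t) * (1 - w' t) := by linarith [hkey, sub_mul (α (u t)) (β (u t)) (1 - w' t)]
  have : u t = t - w t := rfl
  rw [this] at hβt
  field_simp [hβt]
  linear_combination hβt
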